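/- For all X, Y ∈ W, −tr(S_X∘S_Y) = 2∑_A ⟨S_{e_A}(X), S_{e_A}(Y)⟩, where (e_A) is any orthonormal basis of W. -/

import Mathlib

open scoped RealInnerProductSpace

/-- The endomorphism `S_X` of `V` associated to a second fundamental form `Π` and its
Weingarten operator `A`: `S_X(Z) = Π(X, P_W Z) - A_{P_{W^⊥} Z}(X)`. -/
noncomputable def Sop {V : Type*} [NormedAddCommGroup V] [InnerProductSpace ℝ V]
    [FiniteDimensional ℝ V] (W : Submodule ℝ V)
    (Pi : W →ₗ[ℝ] W →ₗ[ℝ] ↥Wᗮ) (A : ↥Wᗮ →ₗ[ℝ] W →ₗ[ℝ] W) (X : W) : V →ₗ[ℝ] V :=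
  Wᗮ.subtype ∘ₗ (Pi X) ∘ₗ W.orthogonalProjection.toLinearMap
    - W.subtype ∘ₗ (A.flip X) ∘ₗ Wᗮ.orthogonalProjection.toLinearMap

lemma trace_onb {E : Type*} [NormedAddCommGroup E] [InnerProductSpace ℝ E]
    [FiniteDimensional ℝ E] {ι : Type*} [Fintype ι] (b : OrthonormalBasis ι ℝ E)
    (T : E →ₗ[ℝ] E) : LinearMap.trace ℝ E T = ∑ i, ⟪b i, T (b i)⟫ := by
  classical
  rw [LinearMap.trace_eq_matrix_trace ℝ b.toBasis, Matrix.trace]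
  apply Finset.sum_congr rfl
  intro i _
  rw [Matrix.diag_apply, LinearMap.toMatrix_apply, OrthonormalBasis.coe_toBasis,
    OrthonormalBasis.coe_toBasis_repr_apply, OrthonormalBasis.repr_apply_apply]

/-- For all `X, Y ∈ W`, `-tr (S_X ∘ S_Y) = 2 ∑_A ⟨S_{e_A} X, S_{e_A} Y⟩` for any
orthonormal basis `(e_A)` of `W`. -/
theorem stmt_8 {V : Type*} [NormedAddCommGroup V] [InnerProductSpace ℝ V]
    [FiniteDimensional ℝ V] (W : Submodule ℝ V)
    (Pi : W →ₗ[ℝ] W →ₗ[ℝ] ↥Wᗮ) (A : ↥Wᗮ →ₗ[ℝ] W →ₗ[ℝ] W)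
    (hsymm : ∀ X Y : W, Pi X Y = Pi Y X)
    (hWein : ∀ (ξ : ↥Wᗮ) (X Y : W), ⟪((A ξ X : W) : V), (Y : V)⟫ = ⟪((Pi X Y : ↥Wᗮ) : V), (ξ : V)⟫)
    {ι : Type*} [Fintype ι] (eW : OrthonormalBasis ι ℝ ↥W) (X Y : W) :
    -LinearMap.trace ℝ V (Sop W Pi A X ∘ₗ Sop W Pi A Y)
      = 2 * ∑ i, ⟪Sop W Pi A (eW i) ((X : V)), Sop W Pi A (eW i) ((Y : V))⟫ := by
  classical
  set P := (W.orthogonalProjection).toLinearMap with hP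
  set Q := (Wᗮ.orthogonalProjection).toLinearMap with hQ
  have hPιW : P ∘ₗ W.subtype = LinearMap.id := by
    ext x
    exact congrArg Subtype.val (Submodule.orthogonalProjectionOnto_mem_subspace_eq_self x)
  have hQperp : Q ∘ₗ Wᗮ.subtype = LinearMap.id := by
    ext x
    exact congrArg Subtype.val (Submodule.orthogonalProjectionOnto_mem_subspace_eq_self x)
  have hPperp : P ∘ₗ Wᗮ.subtype = 0 := by
    ext x
    exact congrArg Subtype.val
      (Submodule.orthogonalProjectionOnto_apply_of_mem_orthogonal (K := W) x.2)
  have hQιW : Q ∘ₗ W.subtype = 0 := by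
    ext x
    exact congrArg Subtype.val
      (Submodule.orthogonalProjectionOnto_apply_of_mem_orthogonal (K := Wᗮ)
        (W.le_orthogonal_orthogonal x.2))
  -- decompose Sop
  set B : W → (V →ₗ[ℝ] V) := fun Z => Wᗮ.subtype ∘ₗ (Pi Z) ∘ₗ P with hB
  set C : W → (V →ₗ[ℝ] V) := fun Z => W.subtype ∘ₗ (A.flip Z) ∘ₗ Q with hC
  have hS : ∀ Z : W, Sop W Pi A Z = B Z - C Z := fun Z => rfl
  have hBB : B X ∘ₗ B Y = 0 := by
    ext v
    simp only [hB, LinearMap.comp_apply, LinearMap.zero_apply, Submodule.subtype_apply, hP, ContinuousLinearMap.coe_coe]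
    rw [Submodule.orthogonalProjectionOnto_apply_of_mem_orthogonal (Submodule.coe_mem _)]
    simp
  have hCC : C X ∘ₗ C Y = 0 := by
    ext v
    simp only [hC, LinearMap.comp_apply, LinearMap.zero_apply, Submodule.subtype_apply, hQ, ContinuousLinearMap.coe_coe]
    rw [Submodule.orthogonalProjectionOnto_apply_of_mem_orthogonal
      (W.le_orthogonal_orthogonal (Submodule.coe_mem _))]
    simp
  have hBC : B X ∘ₗ C Y = Wᗮ.subtype ∘ₗ ((Pi X) ∘ₗ (A.flip Y)) ∘ₗ Q := by
    ext v
    simp only [hB, hC, LinearMap.comp_apply, Submodule.subtype_apply, hP, ContinuousLinearMap.coe_coe]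
    rw [Submodule.orthogonalProjectionOnto_mem_subspace_eq_self]
  have hCB : C X ∘ₗ B Y = W.subtype ∘ₗ ((A.flip X) ∘ₗ (Pi Y)) ∘ₗ P := by
    ext v
    simp only [hB, hC, LinearMap.comp_apply, Submodule.subtype_apply, hQ, ContinuousLinearMap.coe_coe]
    rw [Submodule.orthogonalProjectionOnto_mem_subspace_eq_self]
  -- trace of a conjugated-by-inclusion map
  have trW : ∀ M : W →ₗ[ℝ] W,
      LinearMap.trace ℝ V (W.subtype ∘ₗ M ∘ₗ P) = LinearMap.trace ℝ W M := by
    intro M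
    rw [LinearMap.trace_comp_comm', LinearMap.comp_assoc, hPιW, LinearMap.comp_id]
  have trWp : ∀ M : ↥Wᗮ →ₗ[ℝ] ↥Wᗮ,
      LinearMap.trace ℝ V (Wᗮ.subtype ∘ₗ M ∘ₗ Q) = LinearMap.trace ℝ ↥Wᗮ M := by
    intro M
    rw [LinearMap.trace_comp_comm', LinearMap.comp_assoc, hQperp, LinearMap.comp_id]
  have key : Sop W Pi A X ∘ₗ Sop W Pi A Y = -(B X ∘ₗ C Y) - (C X ∘ₗ B Y) := by
    rw [hS, hS, LinearMap.sub_comp, LinearMap.comp_sub, LinearMap.comp_sub, hBB, hCC]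
    abel
  rw [key, map_sub, map_neg, hBC, hCB, trW, trWp, LinearMap.trace_comp_comm',
    trace_onb eW ((A.flip Y) ∘ₗ (Pi X)), trace_onb eW ((A.flip X) ∘ₗ (Pi Y))]
  have h1 : ∀ i : ι, ⟪eW i, ((A.flip Y) ∘ₗ (Pi X)) (eW i)⟫
      = ⟪((Pi X (eW i) : ↥Wᗮ) : V), ((Pi Y (eW i) : ↥Wᗮ) : V)⟫ := by
    intro i
    have h := hWein (Pi X (eW i)) Y (eW i)
    simp only [LinearMap.comp_apply, LinearMap.flip_apply]
    rw [real_inner_comm, Submodule.coe_inner, h, hsymm Y (eW i), real_inner_comm]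
  have h2 : ∀ i : ι, ⟪eW i, ((A.flip X) ∘ₗ (Pi Y)) (eW i)⟫
      = ⟪((Pi X (eW i) : ↥Wᗮ) : V), ((Pi Y (eW i) : ↥Wᗮ) : V)⟫ := by
    intro i
    have h := hWein (Pi Y (eW i)) X (eW i)
    simp only [LinearMap.comp_apply, LinearMap.flip_apply]
    rw [real_inner_comm, Submodule.coe_inner, h, hsymm X (eW i)]
  have hco : ∀ (Z x : W), Sop W Pi A Z ((x : W) : V) = ((Pi Z x : ↥Wᗮ) : V) := by
    intro Z x
    simp only [Sop, LinearMap.sub_apply, LinearMap.comp_apply, Submodule.subtype_apply,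
      ContinuousLinearMap.coe_coe]
    rw [Submodule.orthogonalProjectionOnto_mem_subspace_eq_self,
      Submodule.orthogonalProjectionOnto_apply_of_mem_orthogonal
        (W.le_orthogonal_orthogonal x.2)]
    simp
  simp_rw [h1, h2, hco, hsymm _ X, hsymm _ Y]
  ring
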